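/- (Single-map version of Theorem 1.1: viscosity implicit scheme.) Let H be a real Hilbert space, C a nonempty closed convex subset of H, T : C → C a nonexpansive map with Fix(T) ≠ ∅, f : C → C an α-contraction with 0 ≤ α < 1, and (ε_n) a sequence in (0,1) with ε_n → 0. Let (ξ_n) be the sequence in C determined by the implicit scheme ξ_n = ε_n·f(ξ_n) + (1−ε_n)·T(ξ_n). Then (ξ_n) converges strongly to a point q ∈ Fix(T), and q is the unique point of Fix(T) satisfying the variational inequality ⟨f(q) − q, p − q⟩ ≤ 0 for all p ∈ Fix(T). -/

import Mathlib

open Filter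

private lemma lsp_le {u : ℕ → ℝ} {K b : ℝ} (hK : ∀ n, |u n| ≤ K)
    (h : ∀ᶠ n in atTop, u n ≤ b) : limsup u atTop ≤ b :=
  limsup_le_of_le ((isBoundedUnder_of ⟨-K, fun n => neg_le_of_abs_le (hK n)⟩ :
    IsBoundedUnder (· ≥ ·) atTop u).isCoboundedUnder_le) h

private lemma lsp_ev {u : ℕ → ℝ} {K b : ℝ} (hK : ∀ n, |u n| ≤ K)
    (h : limsup u atTop < b) : ∀ᶠ n in atTop, u n < b :=
  eventually_lt_of_limsup_lt h (isBoundedUnder_of ⟨K, fun n => le_of_abs_le (hK n)⟩)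

private lemma lsp_ge {u : ℕ → ℝ} {K b : ℝ} (hK : ∀ n, |u n| ≤ K)
    (h : ∀ n, b ≤ u n) : b ≤ limsup u atTop :=
  le_limsup_of_frequently_le (Frequently.of_forall h)
    (isBoundedUnder_of ⟨K, fun n => le_of_abs_le (hK n)⟩)

private lemma lsp_combo {a b m : ℕ → ℝ} {Ka Kb Km c : ℝ}
    (hKa : ∀ n, |a n| ≤ Ka) (hKb : ∀ n, |b n| ≤ Kb) (hKm : ∀ n, |m n| ≤ Km)
    (h : ∀ n, m n = a n / 2 + b n / 2 - c) :
    limsup m atTop ≤ limsup a atTop / 2 + limsup b atTop / 2 - c := by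
  refine le_of_forall_pos_le_add fun ε hε => ?_
  have ha := lsp_ev hKa (lt_add_of_pos_right _ hε : limsup a atTop < limsup a atTop + ε)
  have hb := lsp_ev hKb (lt_add_of_pos_right _ hε : limsup b atTop < limsup b atTop + ε)
  refine lsp_le hKm ?_
  filter_upwards [ha, hb] with n h1 h2
  rw [h n]; linarith

private lemma lsp_le_add_const {m a : ℕ → ℝ} {Km Ka c : ℝ}
    (hKm : ∀ n, |m n| ≤ Km) (hKa : ∀ n, |a n| ≤ Ka)
    (h : ∀ᶠ n in atTop, m n ≤ a n + c) : limsup m atTop ≤ limsup a atTop + c := by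
  refine le_of_forall_pos_le_add fun ε hε => ?_
  have ha := lsp_ev hKa (lt_add_of_pos_right _ hε : limsup a atTop < limsup a atTop + ε)
  refine lsp_le hKm ?_
  filter_upwards [ha, h] with n h1 h2
  linarith

private lemma lsp_le_tendsto {m a c : ℕ → ℝ} {Km Ka : ℝ}
    (hKm : ∀ n, |m n| ≤ Km) (hKa : ∀ n, |a n| ≤ Ka)
    (h : ∀ᶠ n in atTop, m n ≤ a n + c n) (hc : Tendsto c atTop (nhds 0)) :
    limsup m atTop ≤ limsup a atTop := by
  refine le_of_forall_pos_le_add fun ε hε => ?_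
  have ha := lsp_ev hKa (lt_add_of_pos_right _ (half_pos hε) :
    limsup a atTop < limsup a atTop + ε/2)
  have hcev : ∀ᶠ n in atTop, c n < ε/2 :=
    (hc.eventually (eventually_lt_nhds (half_pos hε))).mono fun n hn => hn
  refine lsp_le hKm ?_
  filter_upwards [ha, hcev, h] with n h1 h2 h3
  linarith

open Filter

private lemma par_id {H : Type*} [NormedAddCommGroup H] [InnerProductSpace ℝ H]
    (c a b : H) : ‖c - ((1/2:ℝ) • a + (1/2:ℝ) • b)‖^2
      = ‖c - a‖^2/2 + ‖c - b‖^2/2 - ‖a - b‖^2/4 := by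
  have hp := parallelogram_law_with_norm ℝ (c - a) (c - b)
  have h1 : c - a + (c - b) = (2:ℝ) • (c - ((1/2:ℝ) • a + (1/2:ℝ) • b)) := by module
  have h2 : c - a - (c - b) = -(a - b) := by abel
  rw [h1, h2, norm_smul, norm_neg] at hp
  simp only [Real.norm_ofNat] at hp
  nlinarith [hp]

set_option maxHeartbeats 1000000 in
private lemma stmt10_aux {H : Type*} [NormedAddCommGroup H] [InnerProductSpace ℝ H]
    [CompleteSpace H]
    (C : Set H) (hC_closed : IsClosed C) (hC_convex : Convex ℝ C)
    (T : H → H) (hT_maps : ∀ x ∈ C, T x ∈ C)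
    (hT_nonexp : ∀ x ∈ C, ∀ y ∈ C, ‖T x - T y‖ ≤ ‖x - y‖)
    (hT_fix : ∃ p ∈ C, T p = p)
    (f : H → H) (hf_maps : ∀ x ∈ C, f x ∈ C)
    (α : ℝ) (hα0 : 0 ≤ α) (hα1 : α < 1)
    (hf_contr : ∀ x ∈ C, ∀ y ∈ C, ‖f x - f y‖ ≤ α * ‖x - y‖)
    (ε : ℕ → ℝ) (hε : ∀ n, ε n ∈ Set.Ioo (0 : ℝ) 1)
    (hε_lim : Tendsto ε atTop (nhds 0))
    (ξ : ℕ → H) (hξ_mem : ∀ n, ξ n ∈ C)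
    (hξ_eq : ∀ n, ξ n = ε n • f (ξ n) + (1 - ε n) • T (ξ n)) :
    ∃ q, q ∈ C ∧ T q = q ∧
      (∀ p ∈ C, T p = p → (inner ℝ (f q - q) (p - q) : ℝ) ≤ 0) ∧
      ∃ ψ : ℕ → ℕ, StrictMono ψ ∧ Tendsto (fun m => ξ (ψ m)) atTop (nhds q) := by
  obtain ⟨p₀, hp₀C, hp₀T⟩ := hT_fix
  have h1α : (0:ℝ) < 1 - α := by linarith
  -- Step A : key inner product inequality
  have keyA : ∀ n, ∀ p ∈ C, T p = p →
      ‖ξ n - p‖^2 ≤ (inner ℝ (f (ξ n) - p) (ξ n - p) : ℝ) := by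
    intro n p hpC hpT
    obtain ⟨ht0, ht1⟩ := hε n
    have hxp : ξ n - p = ε n • (f (ξ n) - p) + (1 - ε n) • (T (ξ n) - p) := by
      conv_lhs => rw [hξ_eq n]
      module
    have h2 : ‖ξ n - p‖^2 = ε n * (inner ℝ (f (ξ n) - p) (ξ n - p) : ℝ)
        + (1 - ε n) * (inner ℝ (T (ξ n) - p) (ξ n - p) : ℝ) := by
      have e : (inner ℝ (ξ n - p) (ξ n - p) : ℝ) = ε n * (inner ℝ (f (ξ n) - p) (ξ n - p) : ℝ)
          + (1 - ε n) * (inner ℝ (T (ξ n) - p) (ξ n - p) : ℝ) := by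
        nth_rewrite 1 [hxp]
        rw [inner_add_left, real_inner_smul_left, real_inner_smul_left]
      rw [← real_inner_self_eq_norm_sq, e]
    have h3 : (inner ℝ (T (ξ n) - p) (ξ n - p) : ℝ) ≤ ‖ξ n - p‖^2 := by
      calc (inner ℝ (T (ξ n) - p) (ξ n - p) : ℝ) ≤ ‖T (ξ n) - p‖ * ‖ξ n - p‖ :=
            real_inner_le_norm _ _
        _ ≤ ‖ξ n - p‖ * ‖ξ n - p‖ := by
            have : ‖T (ξ n) - p‖ ≤ ‖ξ n - p‖ := by
              have := hT_nonexp (ξ n) (hξ_mem n) p hpC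
              rwa [hpT] at this
            exact mul_le_mul_of_nonneg_right this (norm_nonneg _)
        _ = ‖ξ n - p‖^2 := (sq ‖ξ n - p‖).symm
    nlinarith [sq_nonneg ‖ξ n - p‖]
  -- Step B
  have keyB : ∀ n, ∀ p ∈ C, T p = p →
      (1 - α) * ‖ξ n - p‖^2 ≤ (inner ℝ (f p - p) (ξ n - p) : ℝ) := by
    intro n p hpC hpT
    have hA := keyA n p hpC hpT
    have hsplit : (inner ℝ (f (ξ n) - p) (ξ n - p) : ℝ)
        = (inner ℝ (f (ξ n) - f p) (ξ n - p) : ℝ) + (inner ℝ (f p - p) (ξ n - p) : ℝ) := by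
      have e : f (ξ n) - p = (f (ξ n) - f p) + (f p - p) := by abel
      rw [e, inner_add_left]
    have h1 : (inner ℝ (f (ξ n) - f p) (ξ n - p) : ℝ) ≤ α * ‖ξ n - p‖^2 := by
      calc (inner ℝ (f (ξ n) - f p) (ξ n - p) : ℝ) ≤ ‖f (ξ n) - f p‖ * ‖ξ n - p‖ :=
          real_inner_le_norm _ _
        _ ≤ (α * ‖ξ n - p‖) * ‖ξ n - p‖ :=
          mul_le_mul_of_nonneg_right (hf_contr (ξ n) (hξ_mem n) p hpC) (norm_nonneg _)
        _ = α * ‖ξ n - p‖^2 := by ring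
    linarith
  -- boundedness
  set B : ℝ := ‖f p₀ - p₀‖ / (1 - α) with hBdef
  have hB0 : 0 ≤ B := div_nonneg (norm_nonneg _) h1α.le
  have hbound : ∀ n, ‖ξ n - p₀‖ ≤ B := by
    intro n
    have hB := keyB n p₀ hp₀C hp₀T
    have hcs : (inner ℝ (f p₀ - p₀) (ξ n - p₀) : ℝ) ≤ ‖f p₀ - p₀‖ * ‖ξ n - p₀‖ :=
      real_inner_le_norm _ _
    rw [hBdef, le_div_iff₀ h1α]
    rcases (norm_nonneg (ξ n - p₀)).eq_or_lt with h|h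
    · rw [← h]; simp [norm_nonneg]
    · nlinarith
  have hboundx : ∀ x : H, ∀ n, ‖ξ n - x‖ ≤ B + ‖p₀ - x‖ := by
    intro x n
    have hx : ξ n - x = (ξ n - p₀) + (p₀ - x) := by abel
    calc ‖ξ n - x‖ = ‖(ξ n - p₀) + (p₀ - x)‖ := by rw [hx]
      _ ≤ ‖ξ n - p₀‖ + ‖p₀ - x‖ := norm_add_le _ _
      _ ≤ B + ‖p₀ - x‖ := by linarith [hbound n]
  -- ξ n - T ξ n → 0
  have hδ : Tendsto (fun n => ‖ξ n - T (ξ n)‖) atTop (nhds 0) := by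
    set M : ℝ := α * B + ‖f p₀ - p₀‖ + B with hM
    have hid : ∀ n, ξ n - T (ξ n) = ε n • (f (ξ n) - T (ξ n)) := by
      intro n
      nth_rewrite 1 [hξ_eq n]
      module
    have hMb : ∀ n, ‖f (ξ n) - T (ξ n)‖ ≤ M := by
      intro n
      have e : f (ξ n) - T (ξ n) = (f (ξ n) - f p₀) + (f p₀ - p₀) + (p₀ - T (ξ n)) := by abel
      calc ‖f (ξ n) - T (ξ n)‖
          ≤ ‖f (ξ n) - f p₀‖ + ‖f p₀ - p₀‖ + ‖p₀ - T (ξ n)‖ := by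
            rw [e]; exact norm_add₃_le
        _ ≤ α * B + ‖f p₀ - p₀‖ + B := by
            have h1 : ‖f (ξ n) - f p₀‖ ≤ α * B := by
              calc ‖f (ξ n) - f p₀‖ ≤ α * ‖ξ n - p₀‖ := hf_contr _ (hξ_mem n) _ hp₀C
                _ ≤ α * B := mul_le_mul_of_nonneg_left (hbound n) hα0
            have h2 : ‖p₀ - T (ξ n)‖ ≤ B := by
              have := hT_nonexp p₀ hp₀C (ξ n) (hξ_mem n)
              rw [hp₀T] at this
              calc ‖p₀ - T (ξ n)‖ ≤ ‖p₀ - ξ n‖ := this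
                _ = ‖ξ n - p₀‖ := norm_sub_rev _ _
                _ ≤ B := hbound n
            linarith
    have hub : ∀ n, ‖ξ n - T (ξ n)‖ ≤ ε n * M := by
      intro n
      rw [hid n, norm_smul, Real.norm_eq_abs, abs_of_pos (hε n).1]
      exact mul_le_mul_of_nonneg_left (hMb n) (hε n).1.le
    have hlim : Tendsto (fun n => ε n * M) atTop (nhds 0) := by
      simpa using hε_lim.mul_const M
    exact squeeze_zero (fun n => norm_nonneg _) hub hlim
  -- the asymptotic center machinery
  set u : H → ℕ → ℝ := fun x n => ‖ξ n - x‖^2 with hudef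
  set φ : H → ℝ := fun x => limsup (u x) atTop with hφdef
  have huK : ∀ x : H, ∀ n, |u x n| ≤ (B + ‖p₀ - x‖)^2 := by
    intro x n
    simp only [hudef]
    rw [abs_of_nonneg (by positivity)]
    have := hboundx x n
    have h0 := norm_nonneg (ξ n - x)
    nlinarith
  have hu0 : ∀ x n, 0 ≤ u x n := fun x n => by positivity
  -- the infimum
  have hne : (φ '' C).Nonempty := ⟨φ p₀, ⟨p₀, hp₀C, rfl⟩⟩
  have hbdd : BddBelow (φ '' C) := by
    refine ⟨0, fun y ⟨x, _, hx⟩ => ?_⟩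
    rw [← hx]
    exact le_trans (le_refl 0) (lsp_ge (huK x) (hu0 x))
  set d : ℝ := sInf (φ '' C) with hddef
  have hd_le : ∀ x ∈ C, d ≤ φ x := fun x hx => csInf_le hbdd ⟨x, hx, rfl⟩
  -- parallelogram
  have hpar : ∀ a b : H, ∀ n, u ((1/2:ℝ) • a + (1/2:ℝ) • b) n
      = u a n / 2 + u b n / 2 - ‖a - b‖^2 / 4 := by
    intro a b n
    simp only [hudef]
    exact par_id (ξ n) a b
  -- strong convexity of φ over C
  have hconvφ : ∀ a ∈ C, ∀ b ∈ C,
      φ ((1/2:ℝ) • a + (1/2:ℝ) • b) ≤ φ a / 2 + φ b / 2 - ‖a - b‖^2 / 4 := by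
    intro a haC b hbC
    exact lsp_combo (huK a) (huK b) (huK _) (hpar a b)
  -- minimizing sequence
  have hmin : ∀ k : ℕ, ∃ x, x ∈ C ∧ φ x < d + 1/(k+1) := by
    intro k
    have hk : d < d + 1/(k+1) := by
      have : (0:ℝ) < 1/(k+1) := by positivity
      linarith
    obtain ⟨y, ⟨x, hxC, rfl⟩, hy⟩ := exists_lt_of_csInf_lt hne hk
    exact ⟨x, hxC, hy⟩
  choose x hxC hxφ using hmin
  have hsq_bound : ∀ k j : ℕ, ‖x k - x j‖^2 < 2/(k+1) + 2/(j+1) := by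
    intro k j
    have hm := hconvφ (x k) (hxC k) (x j) (hxC j)
    have hd2 := hd_le _ (hC_convex (hxC k) (hxC j)
      (by norm_num : (0:ℝ) ≤ 1/2) (by norm_num : (0:ℝ) ≤ 1/2) (by norm_num))
    have h1 := hxφ k
    have h2 := hxφ j
    have e1 : 2/((k:ℝ)+1) = 2*(1/((k:ℝ)+1)) := by ring
    have e2 : 2/((j:ℝ)+1) = 2*(1/((j:ℝ)+1)) := by ring
    rw [e1, e2]
    linarith
  have hcauchy : CauchySeq x := by
    rw [Metric.cauchySeq_iff']
    intro δ hδ'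
    obtain ⟨N, hN⟩ := exists_nat_gt (4/δ^2)
    refine ⟨N, fun n hn => ?_⟩
    have hb := hsq_bound n N
    have hNp : (0:ℝ) < (N:ℝ)+1 := by positivity
    have hcast : (N:ℝ) ≤ (n:ℝ) := Nat.cast_le.2 hn
    have hkn : 2/((n:ℝ)+1) ≤ 2/((N:ℝ)+1) := by
      gcongr
    have h4 : 4/((N:ℝ)+1) < δ^2 := by
      rw [div_lt_iff₀ hNp]
      have hd2 : 0 < δ^2 := by positivity
      have h5 : 4/δ^2 * δ^2 = 4 := by field_simp
      nlinarith [hN, hd2, h5]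
    have hlt : ‖x n - x N‖^2 < δ^2 := by
      have : 2/((n:ℝ)+1) + 2/((N:ℝ)+1) ≤ 4/((N:ℝ)+1) := by
        have : (2:ℝ)/((N:ℝ)+1) + 2/((N:ℝ)+1) = 4/((N:ℝ)+1) := by ring
        linarith
      linarith
    rw [dist_eq_norm]
    nlinarith [norm_nonneg (x n - x N)]
  obtain ⟨q, hq_lim⟩ := cauchySeq_tendsto_of_complete hcauchy
  have hqC : q ∈ C := hC_closed.mem_of_tendsto hq_lim (Eventually.of_forall hxC)
  have hφq : φ q ≤ d := by
    refine le_of_forall_pos_le_add fun ε' hε' => ?_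
    set M₂ : ℝ := B + ‖p₀ - q‖ + 1 with hM₂
    have hM₂0 : (0:ℝ) < 2*M₂+1 := by positivity
    have hpos : (0:ℝ) < min 1 (ε'/(2*(2*M₂+1))) := lt_min one_pos (by positivity)
    have E1 : ∀ᶠ k in atTop, ‖x k - q‖ < min 1 (ε'/(2*(2*M₂+1))) :=
      (tendsto_iff_norm_sub_tendsto_zero.1 hq_lim).eventually (gt_mem_nhds hpos)
    have E2 : ∀ᶠ k : ℕ in atTop, 1/((k:ℝ)+1) < ε'/2 :=
      tendsto_one_div_add_atTop_nhds_zero_nat.eventually (gt_mem_nhds (half_pos hε'))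
    obtain ⟨k, hk1, hk2⟩ := (E1.and E2).exists
    have hxkq1 : ‖x k - q‖ ≤ 1 := (hk1.trans_le (min_le_left _ _)).le
    have hxkq2 : ‖x k - q‖ ≤ ε'/(2*(2*M₂+1)) := (hk1.trans_le (min_le_right _ _)).le
    have hxkq0 := norm_nonneg (x k - q)
    have hptw : ∀ n, u q n ≤ u (x k) n + (2*M₂+1)*‖x k - q‖ := by
      intro n
      simp only [hudef]
      have ht : ‖ξ n - q‖ ≤ ‖ξ n - x k‖ + ‖x k - q‖ := by
        have e : ξ n - q = (ξ n - x k) + (x k - q) := by abel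
        rw [e]; exact norm_add_le _ _
      have hb1 : ‖ξ n - x k‖ ≤ M₂ := by
        have h1 := hboundx (x k) n
        have h2 : ‖p₀ - x k‖ ≤ ‖p₀ - q‖ + ‖q - x k‖ := by
          have e : p₀ - x k = (p₀ - q) + (q - x k) := by abel
          rw [e]; exact norm_add_le _ _
        have h3 : ‖q - x k‖ = ‖x k - q‖ := norm_sub_rev _ _
        rw [hM₂]; linarith
      nlinarith [norm_nonneg (ξ n - q), norm_nonneg (ξ n - x k)]
    have hlsp : φ q ≤ φ (x k) + (2*M₂+1)*‖x k - q‖ :=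
      lsp_le_add_const (huK q) (huK (x k)) (Eventually.of_forall hptw)
    have hmul : (2*M₂+1)*‖x k - q‖ ≤ ε'/2 := by
      have h1 : (2*M₂+1)*‖x k - q‖ ≤ (2*M₂+1)*(ε'/(2*(2*M₂+1))) :=
        mul_le_mul_of_nonneg_left hxkq2 hM₂0.le
      have hne' : (2*M₂+1) ≠ 0 := ne_of_gt hM₂0
      have h2 : (2*M₂+1)*(ε'/(2*(2*M₂+1))) = ε'/2 := by
        field_simp
      linarith
    have h3 := hxφ k
    clear_value M₂ B u φ d
    linarith [hlsp, hmul, h3, hk2]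
  -- fixed point
  have hqT : T q = q := by
    have hTqC := hT_maps q hqC
    set Mq : ℝ := B + ‖p₀ - q‖ with hMq
    have hptw : ∀ n, u (T q) n ≤ u q n + ‖ξ n - T (ξ n)‖ * (‖ξ n - T (ξ n)‖ + 2*Mq) := by
      intro n
      simp only [hudef]
      have ht : ‖ξ n - T q‖ ≤ ‖ξ n - T (ξ n)‖ + ‖ξ n - q‖ := by
        have e : ξ n - T q = (ξ n - T (ξ n)) + (T (ξ n) - T q) := by abel
        have h2 := hT_nonexp (ξ n) (hξ_mem n) q hqC
        calc ‖ξ n - T q‖ = ‖(ξ n - T (ξ n)) + (T (ξ n) - T q)‖ := by rw [e]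
          _ ≤ ‖ξ n - T (ξ n)‖ + ‖T (ξ n) - T q‖ := norm_add_le _ _
          _ ≤ _ := by linarith
      have hb1 : ‖ξ n - q‖ ≤ Mq := hboundx q n
      nlinarith [norm_nonneg (ξ n - T q), norm_nonneg (ξ n - T (ξ n)), norm_nonneg (ξ n - q)]
    have hc0 : Tendsto (fun n => ‖ξ n - T (ξ n)‖ * (‖ξ n - T (ξ n)‖ + 2*Mq)) atTop (nhds 0) := by
      have := hδ.mul (hδ.add_const (2*Mq))
      simpa using this
    have hTle : φ (T q) ≤ φ q :=
      lsp_le_tendsto (huK (T q)) (huK q) (Eventually.of_forall hptw) hc0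
    have hd1 : d ≤ φ (T q) := hd_le _ hTqC
    have hmid := hconvφ q hqC (T q) hTqC
    have hdmid := hd_le _ (hC_convex hqC hTqC
      (by norm_num : (0:ℝ) ≤ 1/2) (by norm_num : (0:ℝ) ≤ 1/2) (by norm_num))
    have hz : ‖q - T q‖^2 ≤ 0 := by linarith
    have h0 : ‖q - T q‖ = 0 := by nlinarith [norm_nonneg (q - T q)]
    exact (sub_eq_zero.1 (norm_eq_zero.1 h0)).symm
  -- frequently small inner products
  have hfreq : ∀ m : ℕ, ∃ᶠ n in atTop, (inner ℝ (f q - q) (ξ n - q) : ℝ) < 1/(m+1) := by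
    intro m
    by_contra hcon
    rw [not_frequently] at hcon
    have hev : ∀ᶠ n in atTop, 1/((m:ℝ)+1) ≤ (inner ℝ (f q - q) (ξ n - q) : ℝ) := by
      filter_upwards [hcon] with n hn
      exact not_lt.1 hn
    set δ' : ℝ := 1/((m:ℝ)+1) with hδ'def
    have hδ'0 : 0 < δ' := by rw [hδ'def]; positivity
    set v : H := f q - q with hv
    set t : ℝ := min 1 (δ'/(‖v‖^2+1)) with htdef
    have ht0 : 0 < t := lt_min one_pos (by positivity)
    have ht1 : t ≤ 1 := min_le_left _ _
    have ht2 : t ≤ δ'/(‖v‖^2+1) := min_le_right _ _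
    have hqtC : q + t • v ∈ C := by
      have hfqC := hf_maps q hqC
      have e : (1-t) • q + t • (f q) = q + t • v := by rw [hv]; module
      rw [← e]
      exact hC_convex hqC hfqC (by linarith) ht0.le (by ring)
    have hptw : ∀ᶠ n in atTop, u (q + t • v) n ≤ u q n + (t^2*‖v‖^2 - 2*t*δ') := by
      filter_upwards [hev] with n hn
      simp only [hudef]
      have e : ξ n - (q + t • v) = (ξ n - q) - t • v := by abel
      rw [e, norm_sub_sq_real, real_inner_smul_right, norm_smul, Real.norm_eq_abs,
        abs_of_pos ht0, mul_pow]
      nlinarith [hn, ht0, real_inner_comm v (ξ n - q)]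
    have hneg : t^2*‖v‖^2 - 2*t*δ' ≤ -(t*δ') := by
      have h1 : t*(‖v‖^2+1) ≤ δ' := (le_div_iff₀ (by positivity)).1 ht2
      have h2 : t*‖v‖^2 ≤ δ' := by nlinarith [ht0]
      nlinarith [mul_le_mul_of_nonneg_left h2 ht0.le, ht0, ht1]
    have hfinal : φ (q + t • v) ≤ φ q + (t^2*‖v‖^2 - 2*t*δ') :=
      lsp_le_add_const (huK (q + t • v)) (huK q) hptw
    have hd3 := hd_le _ hqtC
    have := mul_pos ht0 hδ'0
    linarith
  obtain ⟨ψ, hψmono, hψ⟩ := extraction_forall_of_frequently hfreq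
  have hconv : Tendsto (fun m => ξ (ψ m)) atTop (nhds q) := by
    have hsq : Tendsto (fun m => ‖ξ (ψ m) - q‖^2) atTop (nhds 0) := by
      have hub : ∀ m : ℕ, ‖ξ (ψ m) - q‖^2 ≤ (1/((m:ℝ)+1))/(1-α) := by
        intro m
        have hk := keyB (ψ m) q hqC hqT
        have h2 := hψ m
        rw [le_div_iff₀ h1α]
        nlinarith [hk, h2]
      have hg : Tendsto (fun m : ℕ => (1/((m:ℝ)+1))/(1-α)) atTop (nhds 0) := by
        have := tendsto_one_div_add_atTop_nhds_zero_nat.div_const (1-α)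
        simpa using this
      exact squeeze_zero (fun m => by positivity) hub hg
    have hsqrt : Tendsto (fun m => Real.sqrt (‖ξ (ψ m) - q‖^2)) atTop (nhds (Real.sqrt 0)) :=
      (Real.continuous_sqrt.tendsto 0).comp hsq
    rw [Real.sqrt_zero] at hsqrt
    have e : (fun m => Real.sqrt (‖ξ (ψ m) - q‖^2)) = fun m => ‖ξ (ψ m) - q‖ :=
      funext fun m => Real.sqrt_sq (norm_nonneg _)
    rw [e] at hsqrt
    exact tendsto_iff_norm_sub_tendsto_zero.2 hsqrt
  have hVI : ∀ p ∈ C, T p = p → (inner ℝ (f q - q) (p - q) : ℝ) ≤ 0 := by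
    intro p hpC hpT
    have hnorm0 : Tendsto (fun m => ‖ξ (ψ m) - q‖) atTop (nhds 0) :=
      tendsto_iff_norm_sub_tendsto_zero.1 hconv
    have hfconv : Tendsto (fun m => f (ξ (ψ m))) atTop (nhds (f q)) := by
      rw [tendsto_iff_norm_sub_tendsto_zero]
      have hub : ∀ m : ℕ, ‖f (ξ (ψ m)) - f q‖ ≤ α * ‖ξ (ψ m) - q‖ :=
        fun m => hf_contr _ (hξ_mem _) q hqC
      have hg : Tendsto (fun m : ℕ => α * ‖ξ (ψ m) - q‖) atTop (nhds 0) := by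
        simpa using hnorm0.const_mul α
      exact squeeze_zero (fun m => norm_nonneg _) hub hg
    have hL : Tendsto (fun m => ‖ξ (ψ m) - p‖^2) atTop (nhds (‖q - p‖^2)) :=
      ((hconv.sub tendsto_const_nhds).norm).pow 2
    have hR : Tendsto (fun m => (inner ℝ (f (ξ (ψ m)) - p) (ξ (ψ m) - p) : ℝ)) atTop
        (nhds (inner ℝ (f q - p) (q - p))) :=
      (hfconv.sub tendsto_const_nhds).inner (hconv.sub tendsto_const_nhds)
    have hle : ‖q - p‖^2 ≤ (inner ℝ (f q - p) (q - p) : ℝ) :=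
      le_of_tendsto_of_tendsto' hL hR (fun m => keyA (ψ m) p hpC hpT)
    have e1 : (inner ℝ (f q - p) (q - p) : ℝ) = inner ℝ (f q - q) (q - p) + ‖q - p‖^2 := by
      have e : f q - p = (f q - q) + (q - p) := by abel
      rw [e, inner_add_left, real_inner_self_eq_norm_sq]
    have e2 : (inner ℝ (f q - q) (q - p) : ℝ) = -(inner ℝ (f q - q) (p - q) : ℝ) := by
      have e : q - p = -(p - q) := by abel
      rw [e, inner_neg_right]
    linarith
  exact ⟨q, hqC, hqT, hVI, ψ, hψmono, hconv⟩ 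


/-- strong convergence of the implicit viscosity scheme to the unique
solution of the associated variational inequality on the fixed point set. -/
theorem stmt10 {H : Type*} [NormedAddCommGroup H] [InnerProductSpace ℝ H] [CompleteSpace H]
    (C : Set H) (hC_ne : C.Nonempty) (hC_closed : IsClosed C) (hC_convex : Convex ℝ C)
    (T : H → H) (hT_maps : ∀ x ∈ C, T x ∈ C)
    (hT_nonexp : ∀ x ∈ C, ∀ y ∈ C, ‖T x - T y‖ ≤ ‖x - y‖)
    (hT_fix : ∃ p ∈ C, T p = p)
    (f : H → H) (hf_maps : ∀ x ∈ C, f x ∈ C)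
    (α : ℝ) (hα0 : 0 ≤ α) (hα1 : α < 1)
    (hf_contr : ∀ x ∈ C, ∀ y ∈ C, ‖f x - f y‖ ≤ α * ‖x - y‖)
    (ε : ℕ → ℝ) (hε : ∀ n, ε n ∈ Set.Ioo (0 : ℝ) 1)
    (hε_lim : Tendsto ε atTop (nhds 0))
    (ξ : ℕ → H) (hξ_mem : ∀ n, ξ n ∈ C)
    (hξ_eq : ∀ n, ξ n = ε n • f (ξ n) + (1 - ε n) • T (ξ n)) :
    ∃ q, q ∈ C ∧ T q = q ∧ Tendsto ξ atTop (nhds q) ∧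
      (∀ p ∈ C, T p = p → (inner ℝ (f q - q) (p - q) : ℝ) ≤ 0) ∧
      (∀ q', q' ∈ C → T q' = q' →
        (∀ p ∈ C, T p = p → (inner ℝ (f q' - q') (p - q') : ℝ) ≤ 0) → q' = q) := by
  obtain ⟨q, hqC, hqT, hVI, ψ₀, hψ₀mono, hψ₀⟩ := stmt10_aux C hC_closed hC_convex T hT_maps
    hT_nonexp hT_fix f hf_maps α hα0 hα1 hf_contr ε hε hε_lim ξ hξ_mem hξ_eq
  have huniq : ∀ q₁, q₁ ∈ C → T q₁ = q₁ →
      (∀ p ∈ C, T p = p → (inner ℝ (f q₁ - q₁) (p - q₁) : ℝ) ≤ 0) → q₁ = q := by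
    intro q₁ hq₁C hq₁T hVI₁
    have h1 := hVI q₁ hq₁C hq₁T
    have h2 := hVI₁ q hqC hqT
    have e : f q₁ - q₁ = -(f q - f q₁) + (f q - q) + (q - q₁) := by abel
    have e1 : (inner ℝ (f q₁ - q₁) (q - q₁) : ℝ)
        = -(inner ℝ (f q - f q₁) (q - q₁) : ℝ) + (inner ℝ (f q - q) (q - q₁) : ℝ)
          + (inner ℝ (q - q₁) (q - q₁) : ℝ) := by
      rw [e, inner_add_left, inner_add_left, inner_neg_left]
    have e2 : (inner ℝ (f q - q) (q - q₁) : ℝ) = -(inner ℝ (f q - q) (q₁ - q) : ℝ) := by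
      rw [show q - q₁ = -(q₁ - q) from by abel, inner_neg_right]
    have hcs : (inner ℝ (f q - f q₁) (q - q₁) : ℝ) ≤ α * ‖q - q₁‖^2 := by
      calc (inner ℝ (f q - f q₁) (q - q₁) : ℝ) ≤ ‖f q - f q₁‖ * ‖q - q₁‖ :=
          real_inner_le_norm _ _
        _ ≤ (α * ‖q - q₁‖) * ‖q - q₁‖ :=
          mul_le_mul_of_nonneg_right (hf_contr _ hqC _ hq₁C) (norm_nonneg _)
        _ = α * ‖q - q₁‖^2 := by ring
    have hself : (inner ℝ (q - q₁) (q - q₁) : ℝ) = ‖q - q₁‖^2 := real_inner_self_eq_norm_sq _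
    have hz : ‖q - q₁‖^2 ≤ 0 := by nlinarith [h1, h2, e1, e2, hcs, hself]
    have hsq0 : ‖q - q₁‖^2 = 0 := le_antisymm hz (sq_nonneg _)
    have h0 : ‖q - q₁‖ = 0 := pow_eq_zero_iff two_ne_zero |>.1 hsq0
    exact (sub_eq_zero.1 (norm_eq_zero.1 h0)).symm
  refine ⟨q, hqC, hqT, ?_, hVI, fun q' h1 h2 h3 => huniq q' h1 h2 h3⟩
  refine tendsto_of_subseq_tendsto fun ns hns => ?_
  obtain ⟨q₂, hq₂C, hq₂T, hVI₂, ψ, hψmono, hψ⟩ := stmt10_aux C hC_closed hC_convex T hT_maps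
    hT_nonexp hT_fix f hf_maps α hα0 hα1 hf_contr (fun n => ε (ns n)) (fun n => hε (ns n))
    (hε_lim.comp hns) (fun n => ξ (ns n)) (fun n => hξ_mem (ns n)) (fun n => hξ_eq (ns n))
  have heq : q₂ = q := huniq q₂ hq₂C hq₂T hVI₂
  rw [heq] at hψ
  exact ⟨ψ, hψ⟩
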